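/- Let f be a finitely supported probability distribution on ℤ₊ and f_t = T_t f its thinning. With g_t defined by g_t(k) = −Σ_{l≤k} ∂/∂t f_t(l), we have g_t(k) ≥ 0 for all k ∈ ℤ and t ∈ [0,1]. -/

import Mathlib

open scoped BigOperators

noncomputable section

/-- Derivative value of the binomial kernel term. -/
def Dv (l m : ℕ) (s : ℝ) : ℝ :=
  (l.choose m : ℝ) * ((m : ℝ) * s ^ (m - 1) * (1 - s) ^ (l - m)
    + s ^ m * (((l - m : ℕ) : ℝ) * (1 - s) ^ (l - m - 1) * -1))

/-- Flux density. -/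
def psiAux (l K : ℕ) (s : ℝ) : ℝ :=
  (l : ℝ) * ((l - 1).choose K : ℝ) * s ^ K * (1 - s) ^ (l - 1 - K)

lemma hasDerivAt_phi (l m : ℕ) (s : ℝ) :
    HasDerivAt (fun s : ℝ => (l.choose m : ℝ) * s ^ m * (1 - s) ^ (l - m)) (Dv l m s) s := by
  have h1 : HasDerivAt (fun s : ℝ => s ^ m) ((m : ℝ) * s ^ (m - 1)) s := hasDerivAt_pow m s
  have h2 : HasDerivAt (fun s : ℝ => (1 - s) ^ (l - m))
      (((l - m : ℕ) : ℝ) * (1 - s) ^ (l - m - 1) * -1) s :=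
    ((hasDerivAt_id s).const_sub 1).pow _
  have h := (h1.mul h2).const_mul ((l.choose m : ℝ))
  simpa [Dv, mul_assoc] using h

lemma Dv_succ (l K : ℕ) (s : ℝ) : Dv l (K + 1) s = psiAux l K s - psiAux l (K + 1) s := by
  unfold Dv psiAux
  rcases le_or_gt (K + 1) l with h | h
  · have hl : 1 ≤ l := le_trans (by omega) h
    have e1 : l - 1 - K = l - (K + 1) := by omega
    have e2 : l - 1 - (K + 1) = l - (K + 1) - 1 := by omega
    have h1 : l * (l - 1).choose K = l.choose (K + 1) * (K + 1) := by
      have := Nat.add_one_mul_choose_eq (l - 1) K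
      rwa [Nat.sub_add_cancel hl] at this
    have h2 : (l - 1).choose (K + 1) * l = l.choose (K + 1) * (l - (K + 1)) := by
      have := Nat.choose_mul_succ_eq (l - 1) (K + 1)
      rwa [Nat.sub_add_cancel hl] at this
    have h1R : (l : ℝ) * ((l - 1).choose K : ℝ) = (l.choose (K + 1) : ℝ) * (K + 1) := by
      exact_mod_cast congrArg (Nat.cast : ℕ → ℝ) h1
    have h2R : ((l - 1).choose (K + 1) : ℝ) * l
        = (l.choose (K + 1) : ℝ) * (((l - (K + 1) : ℕ)) : ℝ) := by
      exact_mod_cast congrArg (Nat.cast : ℕ → ℝ) h2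
    rw [e1, e2]
    have e3 : (K + 1) - 1 = K := by omega
    rw [e3]
    push_cast
    push_cast at h1R h2R
    linear_combination (s ^ K * (1 - s) ^ (l - (K + 1))) * h1R.symm
      + (s ^ (K + 1) * (1 - s) ^ (l - (K + 1) - 1)) * h2R
  · rcases Nat.eq_zero_or_pos l with rfl | hl
    · simp
    · have c1 : l.choose (K + 1) = 0 := Nat.choose_eq_zero_of_lt h
      have c2 : (l - 1).choose K = 0 := Nat.choose_eq_zero_of_lt (by omega)
      have c3 : (l - 1).choose (K + 1) = 0 := Nat.choose_eq_zero_of_lt (by omega)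
      simp [c1, c2, c3]

lemma sum_Dv (l K : ℕ) (s : ℝ) :
    ∑ m ∈ Finset.range (K + 1), Dv l m s = -psiAux l K s := by
  induction K with
  | zero =>
    simp [Dv, psiAux]
  | succ K ih =>
    rw [Finset.sum_range_succ, ih, Dv_succ]
    ring

theorem thinning_flux_nonneg
    (N : ℕ) (f : ℕ → ℝ)
    (hf : ∀ l, 0 ≤ f l)
    (hsupp : ∀ l, N ≤ l → f l = 0)
    (hsum : ∑ l ∈ Finset.range N, f l = 1)
    (ft : ℝ → ℤ → ℝ)
    (hft : ∀ t (k : ℤ), ft t k =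
      if k < 0 then 0 else
        ∑ l ∈ Finset.range N,
          (l.choose k.toNat : ℝ) * t ^ k.toNat * (1 - t) ^ (l - k.toNat) * f l)
    (g : ℝ → ℤ → ℝ)
    (hg : ∀ t (k : ℤ), g t k = -∑ l ∈ Finset.Icc (0 : ℤ) k, deriv (fun s => ft s l) t)
    (t : ℝ) (ht : t ∈ Set.Icc (0 : ℝ) 1) (k : ℤ) :
    0 ≤ g t k := by
  rcases lt_or_ge k 0 with hk | hk
  · rw [hg, Finset.Icc_eq_empty (by omega), Finset.sum_empty, neg_zero]
  · -- derivative of ft at a nonnegative index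
    have hderiv : ∀ j : ℤ, 0 ≤ j →
        deriv (fun s => ft s j) t = ∑ l ∈ Finset.range N, Dv l j.toNat t * f l := by
      intro j hj
      have hfun : (fun s => ft s j) = fun s => ∑ l ∈ Finset.range N,
          (l.choose j.toNat : ℝ) * s ^ j.toNat * (1 - s) ^ (l - j.toNat) * f l := by
        funext s
        rw [hft, if_neg (by omega)]
      rw [hfun]
      exact (HasDerivAt.fun_sum fun l _ => (hasDerivAt_phi l j.toNat t).mul_const (f l)).deriv
    rw [hg]
    have hmap : Finset.Icc (0 : ℤ) k
        = Finset.map ⟨(Nat.cast : ℕ → ℤ), Nat.cast_injective⟩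
            (Finset.range (k.toNat + 1)) := by
      ext x
      simp only [Finset.mem_Icc, Finset.mem_map, Finset.mem_range,
        Function.Embedding.coeFn_mk]
      constructor
      · intro hx
        exact ⟨x.toNat, by omega, by omega⟩
      · rintro ⟨m, hm, rfl⟩
        omega
    rw [hmap, Finset.sum_map]
    simp only [Function.Embedding.coeFn_mk]
    have hrw : ∀ m ∈ Finset.range (k.toNat + 1),
        deriv (fun s => ft s (m : ℤ)) t = ∑ l ∈ Finset.range N, Dv l m t * f l := by
      intro m _
      rw [hderiv (m : ℤ) (by positivity)]
      simp
    rw [Finset.sum_congr rfl hrw, Finset.sum_comm]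
    have : ∀ l ∈ Finset.range N,
        ∑ m ∈ Finset.range (k.toNat + 1), Dv l m t * f l = -(psiAux l k.toNat t * f l) := by
      intro l _
      rw [← Finset.sum_mul, sum_Dv]
      ring
    rw [Finset.sum_congr rfl this, Finset.sum_neg_distrib, neg_neg]
    apply Finset.sum_nonneg
    intro l _
    have h1 : 0 ≤ t := ht.1
    have h2 : 0 ≤ 1 - t := by linarith [ht.2]
    have : 0 ≤ psiAux l k.toNat t := by
      unfold psiAux
      positivity
    exact mul_nonneg this (hf l)
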